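/- For $2 \leq m \leq n/2$ and $k_1 \leq k_2 \leq \dots \leq k_n$ with all $k_i \geq 2$ and $K = \max_i k_i$: if $K \leq 2^{n/12}$ then $\prod_{i=n-m+1}^{n} k_i^{1/2} \leq \prod_{i=1}^{n-m} k_i^{m/3 - 1/2}$, equivalently $\prod_{i=1}^{n-m} k_i^{-m/3} \leq \prod_{i=1}^{n} k_i^{-1/2}$. -/

import Mathlib

open Finset

lemma card_filter_fin (n : ℕ) (p : ℕ → Prop) [DecidablePred p] :
    (univ.filter fun i : Fin n => p (i : ℕ)).card = ((Finset.range n).filter p).card := by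
  rw [Finset.card_filter, Finset.card_filter]
  exact Fin.sum_univ_eq_sum_range (fun x => if p x then 1 else 0) n


/-- For `2 ≤ m ≤ n/2` and `2 ≤ k₁ ≤ ⋯ ≤ kₙ` with `K = max kᵢ ≤ 2^(n/12)`:
`∏_{i=n-m+1}^n kᵢ^(1/2) ≤ ∏_{i=1}^{n-m} kᵢ^(m/3 - 1/2)`, equivalently
`∏_{i=1}^{n-m} kᵢ^(-m/3) ≤ ∏_{i=1}^n kᵢ^(-1/2)`. -/
theorem stmt12 (n m : ℕ) (hm : 2 ≤ m) (hmn : 2 * m ≤ n)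
    (k : Fin n → ℕ) (hk : ∀ i, 2 ≤ k i)
    (hmono : ∀ i j : Fin n, i ≤ j → k i ≤ k j)
    (K : ℕ) (hKub : ∀ i, k i ≤ K) (hKmem : ∃ i, k i = K)
    (hKn : (K : ℝ) ≤ (2 : ℝ) ^ ((n : ℝ) / 12)) :
    (∏ i ∈ univ.filter (fun i : Fin n => n - m ≤ (i : ℕ)), (k i : ℝ) ^ ((1 : ℝ) / 2) ≤
      ∏ i ∈ univ.filter (fun i : Fin n => (i : ℕ) < n - m), (k i : ℝ) ^ ((m : ℝ) / 3 - 1 / 2)) ∧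
    (∏ i ∈ univ.filter (fun i : Fin n => (i : ℕ) < n - m), (k i : ℝ) ^ (-(m : ℝ) / 3) ≤
      ∏ i : Fin n, (k i : ℝ) ^ (-(1 : ℝ) / 2)) := by
  have hmn' : m ≤ n := le_trans (by omega) hmn
  set T := univ.filter (fun i : Fin n => n - m ≤ (i : ℕ)) with hT
  set H := univ.filter (fun i : Fin n => (i : ℕ) < n - m) with hH
  have hcardT : T.card = m := by
    rw [hT, card_filter_fin]
    have : (Finset.range n).filter (fun x => n - m ≤ x) = Finset.Ico (n - m) n := by
      ext x; simp only [Finset.mem_filter, Finset.mem_range, Finset.mem_Ico]; omega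
    rw [this, Nat.card_Ico]; omega
  have hcardH : H.card = n - m := by
    rw [hH, card_filter_fin n (fun x => x < n - m)]
    have : (Finset.range n).filter (fun x => x < n - m) = Finset.range (n - m) := by
      ext x; simp [Finset.mem_filter, Finset.mem_range]; omega
    rw [this, Finset.card_range]
  have hkpos : ∀ i, (0:ℝ) < (k i : ℝ) := fun i => by
    have := hk i; positivity
  have hk2 : ∀ i, (2:ℝ) ≤ (k i : ℝ) := fun i => by exact_mod_cast hk i
  have hexp : (0:ℝ) ≤ (m : ℝ) / 3 - 1 / 2 := by
    have : (2:ℝ) ≤ (m:ℝ) := by exact_mod_cast hm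
    linarith
  -- part 1
  have h1 : ∏ i ∈ T, (k i : ℝ) ^ ((1 : ℝ) / 2) ≤
      ∏ i ∈ H, (k i : ℝ) ^ ((m : ℝ) / 3 - 1 / 2) := by
    have hA : ∏ i ∈ T, (k i : ℝ) ^ ((1 : ℝ) / 2) ≤
        (2:ℝ) ^ ((n:ℝ)/12 * (1/2) * m) := by
      calc ∏ i ∈ T, (k i : ℝ) ^ ((1 : ℝ) / 2)
          ≤ ∏ _i ∈ T, ((2:ℝ) ^ ((n:ℝ)/12)) ^ ((1:ℝ)/2) := by
            apply Finset.prod_le_prod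
            · intro i _; positivity
            · intro i _
              exact Real.rpow_le_rpow (hkpos i).le
                (le_trans (by exact_mod_cast hKub i) hKn) (by norm_num)
        _ = (2:ℝ) ^ ((n:ℝ)/12 * (1/2) * m) := by
            rw [Finset.prod_const, hcardT, ← Real.rpow_natCast (((2:ℝ) ^ ((n:ℝ)/12)) ^ ((1:ℝ)/2)),
              ← Real.rpow_mul (by positivity), ← Real.rpow_mul (by norm_num)]
            ring_nf
    have hB : (2:ℝ) ^ (((m:ℝ)/3 - 1/2) * (n - m)) ≤
        ∏ i ∈ H, (k i : ℝ) ^ ((m : ℝ) / 3 - 1 / 2) := by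
      calc (2:ℝ) ^ (((m:ℝ)/3 - 1/2) * (n - m))
          = ∏ _i ∈ H, (2:ℝ) ^ ((m:ℝ)/3 - 1/2) := by
            rw [Finset.prod_const, hcardH, ← Real.rpow_natCast ((2:ℝ) ^ ((m:ℝ)/3 - 1/2)),
              ← Real.rpow_mul (by norm_num)]
            congr 1
            rw [Nat.cast_sub hmn']
        _ ≤ ∏ i ∈ H, (k i : ℝ) ^ ((m : ℝ) / 3 - 1 / 2) := by
            apply Finset.prod_le_prod
            · intro i _; positivity
            · intro i _; exact Real.rpow_le_rpow (by norm_num) (hk2 i) hexp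
    refine hA.trans (le_trans ?_ hB)
    apply Real.rpow_le_rpow_of_exponent_le (by norm_num)
    have hmr : (2:ℝ) ≤ (m:ℝ) := by exact_mod_cast hm
    have hnr : 2 * (m:ℝ) ≤ (n:ℝ) := by exact_mod_cast hmn
    nlinarith [mul_nonneg (sub_nonneg.2 hnr) (sub_nonneg.2 hmr),
      mul_nonneg (sub_nonneg.2 hmr) (sub_nonneg.2 hmr)]
  refine ⟨h1, ?_⟩
  -- part 2
  have hsplit : ∏ i : Fin n, (k i : ℝ) ^ (-(1 : ℝ) / 2) =
      (∏ i ∈ H, (k i : ℝ) ^ (-(1 : ℝ) / 2)) * ∏ i ∈ T, (k i : ℝ) ^ (-(1 : ℝ) / 2) := by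
    rw [hH, hT]
    rw [← Finset.prod_filter_mul_prod_filter_not univ (fun i : Fin n => (i : ℕ) < n - m)]
    congr 1
    apply Finset.prod_congr _ (fun _ _ => rfl)
    apply Finset.filter_congr
    intro i _; simp [not_lt]
  have hTinv : ∏ i ∈ T, (k i : ℝ) ^ (-(1 : ℝ) / 2) =
      (∏ i ∈ T, (k i : ℝ) ^ ((1 : ℝ) / 2))⁻¹ := by
    rw [← Finset.prod_inv_distrib]
    apply Finset.prod_congr rfl
    intro i _
    rw [← Real.rpow_neg (hkpos i).le]; norm_num
  have hHeq : ∏ i ∈ H, (k i : ℝ) ^ (-(m : ℝ) / 3) =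
      (∏ i ∈ H, (k i : ℝ) ^ (-(1 : ℝ) / 2)) *
        (∏ i ∈ H, (k i : ℝ) ^ ((m : ℝ) / 3 - 1 / 2))⁻¹ := by
    rw [← Finset.prod_inv_distrib, ← Finset.prod_mul_distrib]
    apply Finset.prod_congr rfl
    intro i _
    rw [← Real.rpow_neg (hkpos i).le, ← Real.rpow_add (hkpos i)]
    ring_nf
  rw [hsplit, hTinv, hHeq]
  apply mul_le_mul_of_nonneg_left _ (by positivity)
  apply inv_anti₀ _ h1
  exact Finset.prod_pos fun i _ => Real.rpow_pos_of_pos (hkpos i) _
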